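/- For every 3×3 complex matrix a, the identity 9·|P(a, a, āᵀ)|² = |det(a)|² + 8·det(Q(a, āᵀ)) holds. In particular det(Q(a, āᵀ)) is real and satisfies −(1/8)·|det(a)|² ≤ det(Q(a, āᵀ)). -/

import Mathlib

open Matrix

/-- The symmetric bilinear polarization of the adjugate on 3×3 complex matrices. -/
noncomputable def Qpol (a b : Matrix (Fin 3) (Fin 3) ℂ) : Matrix (Fin 3) (Fin 3) ℂ :=
  (2 : ℂ)⁻¹ • ((a + b).adjugate - a.adjugate - b.adjugate)

/-- The symmetric trilinear polarization of the determinant on 3×3 complex matrices. -/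
noncomputable def Ppol (a b c : Matrix (Fin 3) (Fin 3) ℂ) : ℂ :=
  (6 : ℂ)⁻¹ * ((a + b + c).det - (a + b).det - (b + c).det - (a + c).det
      + a.det + b.det + c.det)

/-- The key polynomial identity, valid for arbitrary `a b`. -/
lemma key_polarization (a b : Matrix (Fin 3) (Fin 3) ℂ) :
    9 * Ppol a a b * Ppol b b a = a.det * b.det + 8 * (Qpol a b).det := by
  simp only [Ppol, Qpol, det_fin_three, adjugate_fin_three, Matrix.smul_apply, Matrix.sub_apply, Matrix.add_apply,
    of_apply, cons_val', cons_val_zero, cons_val_one, head_cons, empty_val', cons_val_fin_one,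
    head_fin_const, smul_eq_mul, cons_val_two, tail_cons]
  ring

/-- Conjugation swaps the arguments of the polarization. -/
lemma conjP (a : Matrix (Fin 3) (Fin 3) ℂ) :
    (starRingEnd ℂ) (Ppol a a aᴴ) = Ppol aᴴ aᴴ a := by
  simp only [Ppol, det_fin_three, Matrix.add_apply, conjTranspose_apply, map_add, map_sub,
    _root_.map_mul, map_inv₀, map_ofNat, Complex.star_def, Complex.conj_conj]
  ring

/-- `9·|P(a,a,āᵀ)|² = |det(a)|² + 8·det(Q(a,āᵀ))`; in particular
`det(Q(a,āᵀ))` is real and at least `−(1/8)·|det(a)|²`. -/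
theorem stmt7 (a : Matrix (Fin 3) (Fin 3) ℂ) :
    (9 * ‖Ppol a a aᴴ‖ ^ 2 : ℂ)
        = (‖a.det‖ : ℂ) ^ 2 + 8 * (Qpol a aᴴ).det ∧
    ((Qpol a aᴴ).det).im = 0 ∧
    -(1 / 8) * ‖a.det‖ ^ 2 ≤ ((Qpol a aᴴ).det).re := by
  have key := key_polarization a aᴴ
  have hz : (‖Ppol a a aᴴ‖ : ℂ) ^ 2 = Ppol a a aᴴ * Ppol aᴴ aᴴ a := by
    rw [← conjP, Complex.mul_conj, ← Complex.sq_norm]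
    push_cast; ring
  have hd : (‖a.det‖ : ℂ) ^ 2 = a.det * aᴴ.det := by
    rw [det_conjTranspose, Complex.star_def, Complex.mul_conj, ← Complex.sq_norm]
    push_cast; ring
  have h1 : (9 * ‖Ppol a a aᴴ‖ ^ 2 : ℂ)
      = (‖a.det‖ : ℂ) ^ 2 + 8 * (Qpol a aᴴ).det := by
    rw [hz, hd]; linear_combination key
  have h2 : (Qpol a aᴴ).det
      = (((9 * ‖Ppol a a aᴴ‖ ^ 2 - ‖a.det‖ ^ 2) / 8 : ℝ) : ℂ) := by
    push_cast
    linear_combination -h1 / 8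
  refine ⟨h1, ?_, ?_⟩
  · rw [h2]; exact Complex.ofReal_im _
  · rw [h2, Complex.ofReal_re]
    nlinarith [sq_nonneg ‖Ppol a a aᴴ‖]
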